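/- If L is a regular language over Σ ∪ {⊤} (where ⊤ is a distinguished letter), then the language E(L) := {w | ∃ n ∈ ℕ, (w⊤)ⁿw ∈ L} is regular. -/

import Mathlib

/-- `tpow top w n = (w⊤)ⁿw`: `n+1` copies of `w` separated by the letter `⊤`. -/
def tpow {α : Type*} (top : α) (w : List α) : ℕ → List α
  | 0 => w
  | n + 1 => w ++ top :: tpow top w n

/-- `E(L) = {w | ∃ n, (w⊤)ⁿw ∈ L}`. -/
def Elang {α : Type*} (top : α) (L : Language α) : Language α :=
  {w | ∃ n : ℕ, tpow top w n ∈ L}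

/-- iterate reading `tpow` given the transition function of a word. -/
def iterE {α σ : Type*} (M : DFA α σ) (top : α) (f : σ → σ) : σ → ℕ → σ
  | s, 0 => f s
  | s, n + 1 => iterE M top f (M.step (f s) top) n

lemma iterE_spec {α σ : Type*} (M : DFA α σ) (top : α) (w : List α) :
    ∀ n s, iterE M top (fun t => M.evalFrom t w) s n = M.evalFrom s (tpow top w n) := by
  intro n
  induction n with
  | zero => intro s; rfl
  | succ n ih =>
    intro s
    show iterE M top (fun t => M.evalFrom t w) (M.step (M.evalFrom s w) top) n = _
    rw [ih]
    simp [tpow, DFA.evalFrom, List.foldl_append]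

/-- The transition-monoid DFA recognising `E(L)`. -/
def EDFA {α σ : Type*} (M : DFA α σ) (top : α) : DFA α (σ → σ) where
  step := fun f a => fun s => M.step (f s) a
  start := id
  accept := {f | ∃ n, iterE M top f M.start n ∈ M.accept}

lemma EDFA_evalFrom {α σ : Type*} (M : DFA α σ) (top : α) :
    ∀ (w : List α) (g : σ → σ),
      (EDFA M top).evalFrom g w = fun s => M.evalFrom (g s) w := by
  intro w
  induction w with
  | nil => intro g; rfl
  | cons a x ih =>
    intro g
    show (EDFA M top).evalFrom (fun s => M.step (g s) a) x = _
    rw [ih]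
    rfl

lemma EDFA_eval {α σ : Type*} (M : DFA α σ) (top : α) (w : List α) :
    (EDFA M top).eval w = fun s => M.evalFrom s w := by
  rw [DFA.eval, EDFA_evalFrom]
  rfl

/-- If `L` is a regular language over `Σ ∪ {⊤}` then `E(L)` is regular. -/
theorem Elang_isRegular {α : Type*} [Fintype α] (top : α) (L : Language α)
    (hL : L.IsRegular) : (Elang top L).IsRegular := by
  obtain ⟨σ, hfin, M, hM⟩ := hL
  haveI := hfin
  haveI : DecidableEq σ := Classical.decEq σ
  refine ⟨σ → σ, inferInstance, EDFA M top, ?_⟩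
  ext w
  constructor
  · rintro hw
    have : (EDFA M top).eval w ∈ (EDFA M top).accept := hw
    rw [EDFA_eval] at this
    obtain ⟨n, hn⟩ := this
    rw [iterE_spec] at hn
    exact ⟨n, hM ▸ hn⟩
  · rintro ⟨n, hn⟩
    rw [← hM] at hn
    show (EDFA M top).eval w ∈ (EDFA M top).accept
    rw [EDFA_eval]
    exact ⟨n, by rw [iterE_spec]; exact hn⟩
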